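/- Let m ≥ 1, n ≥ 1 with √m ≥ n, and let 0 < τ_1 ≤ ... ≤ τ_n. Then t*(√m) ≤ (2/√m) t*(m), where t*(S) = min_{j∈[n]} (∑_{i=1}^j 1/τ_i)^{-1} (S + j). -/
import Mathlib


theorem equilibrium_time_sqrt_le (m n : ℕ) (hm : 1 ≤ m) (hn : 1 ≤ n)
    (hsqrt : (n : ℝ) ≤ Real.sqrt m) (τ : ℕ → ℝ)
    (hpos : ∀ i ∈ Finset.Icc 1 n, 0 < τ i)
    (hmono : ∀ i j, 1 ≤ i → i ≤ j → j ≤ n → τ i ≤ τ j)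
    (tstar : ℝ → ℝ)
    (htstar : ∀ S : ℝ, tstar S = (Finset.Icc 1 n).inf' (Finset.nonempty_Icc.mpr hn)
        (fun j => (S + j) / ∑ i ∈ Finset.Icc 1 j, 1 / τ i)) :
    tstar (Real.sqrt m) ≤ (2 / Real.sqrt m) * tstar m := by
  have hs : (1:ℝ) ≤ Real.sqrt m := le_trans (by exact_mod_cast hn) hsqrt
  have hs0 : (0:ℝ) < Real.sqrt m := lt_of_lt_of_le one_pos hs
  rw [htstar, htstar]
  obtain ⟨j₀, hj₀, hmin⟩ := Finset.exists_mem_eq_inf' (Finset.nonempty_Icc.mpr hn)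
      (fun j => ((m:ℝ) + j) / ∑ i ∈ Finset.Icc 1 j, 1 / τ i)
  rw [hmin]
  refine le_trans (Finset.inf'_le _ hj₀) ?_
  obtain ⟨h1j, hjn⟩ := Finset.mem_Icc.mp hj₀
  have hD : 0 < ∑ i ∈ Finset.Icc 1 j₀, 1 / τ i := by
    apply Finset.sum_pos
    · intro i hi
      obtain ⟨h1i, hij⟩ := Finset.mem_Icc.mp hi
      exact one_div_pos.mpr (hpos i (Finset.mem_Icc.mpr ⟨h1i, le_trans hij hjn⟩))
    · exact Finset.nonempty_Icc.mpr h1j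
  have hj : (j₀:ℝ) ≤ Real.sqrt m := le_trans (by exact_mod_cast hjn) hsqrt
  have hsq : Real.sqrt m * Real.sqrt m = m := Real.mul_self_sqrt (by positivity)
  have key : Real.sqrt m + j₀ ≤ (2 / Real.sqrt m) * ((m:ℝ) + j₀) := by
    rw [div_mul_eq_mul_div, le_div_iff₀ hs0]
    nlinarith [hj, hs0.le, (Nat.cast_nonneg j₀ : (0:ℝ) ≤ (j₀:ℝ))]
  calc (Real.sqrt m + j₀) / ∑ i ∈ Finset.Icc 1 j₀, 1 / τ i
      ≤ ((2 / Real.sqrt m) * ((m:ℝ) + j₀)) / ∑ i ∈ Finset.Icc 1 j₀, 1 / τ i := by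
        gcongr
    _ = (2 / Real.sqrt m) * (((m:ℝ) + j₀) / ∑ i ∈ Finset.Icc 1 j₀, 1 / τ i) := by
        ring
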